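/- Let p ≥ 1 and let h : ℝ → ℝ be continuous, strictly increasing, with h(0) = 0, and satisfy |h(s)| ≤ C₁(1 + |s|^p) for all s ∈ ℝ and some constant C₁ > 0. Then there exists a constant C > 0, independent of s, such that |h(s)|^{(p+1)/p} ≤ C(1 + h(s)·s) for all s ∈ ℝ. -/

import Mathlib

/-- If `h : ℝ → ℝ` is continuous, strictly increasing, vanishes at `0`, and satisfies
the growth bound `|h(s)| ≤ C₁(1 + |s|^p)` with `p ≥ 1`, then there is a constant
`C > 0`, independent of `s`, such that `|h(s)|^((p+1)/p) ≤ C(1 + h(s)·s)` for all `s`. -/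
theorem damping_power_estimate (p : ℝ) (hp : 1 ≤ p)
    (h : ℝ → ℝ) (hcont : Continuous h) (hmono : StrictMono h) (h0 : h 0 = 0)
    (C₁ : ℝ) (hC₁ : 0 < C₁) (hgrowth : ∀ s : ℝ, |h s| ≤ C₁ * (1 + |s| ^ p)) :
    ∃ C > 0, ∀ s : ℝ, |h s| ^ ((p + 1) / p) ≤ C * (1 + h s * s) := by
  have hp0 : (0 : ℝ) < p := lt_of_lt_of_le one_pos hp
  set q : ℝ := (p + 1) / p with hqdef
  have hq0 : 0 < q := by positivity
  have hq : q = 1 + 1 / p := by rw [hqdef, add_div, div_self hp0.ne']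
  have h2C : (0 : ℝ) < 2 * C₁ := by linarith
  refine ⟨(2 * C₁) ^ q + (2 * C₁) ^ (1 / p) + 1, by positivity, fun s => ?_⟩
  set C : ℝ := (2 * C₁) ^ q + (2 * C₁) ^ (1 / p) + 1 with hCdef
  have hC0 : 0 < C := by positivity
  have hsign : 0 ≤ h s * s := by
    rcases lt_trichotomy s 0 with hs | hs | hs
    · have : h s < 0 := h0 ▸ hmono hs
      nlinarith
    · simp [hs, h0]
    · have : 0 < h s := h0 ▸ hmono hs
      exact mul_nonneg this.le hs.le
  have habs : |h s| * |s| = h s * s := by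
    rw [← abs_mul]; exact abs_of_nonneg hsign
  rcases le_or_gt |s| 1 with hs1 | hs1
  · -- small s : |h s| ≤ 2 C₁
    have hsp : |s| ^ p ≤ 1 := Real.rpow_le_one (abs_nonneg s) hs1 hp0.le
    have hb : |h s| ≤ 2 * C₁ := by
      have := hgrowth s
      nlinarith
    have : |h s| ^ q ≤ (2 * C₁) ^ q :=
      Real.rpow_le_rpow (abs_nonneg _) hb hq0.le
    have hC1' : (2 * C₁) ^ q ≤ C := by
      have h1 : (0:ℝ) < (2 * C₁) ^ (1 / p) := Real.rpow_pos_of_pos h2C _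
      rw [hCdef]; linarith
    calc |h s| ^ q ≤ (2 * C₁) ^ q := this
      _ ≤ C := hC1'
      _ = C * 1 := (mul_one C).symm
      _ ≤ C * (1 + h s * s) := by
          apply mul_le_mul_of_nonneg_left _ hC0.le
          linarith
  · -- large s
    have hsp1 : (1:ℝ) ≤ |s| ^ p := Real.one_le_rpow hs1.le hp0.le
    have hb : |h s| ≤ 2 * C₁ * |s| ^ p := by
      have := hgrowth s
      nlinarith
    rcases eq_or_lt_of_le (abs_nonneg (h s)) with hz | hz
    · rw [← hz, Real.zero_rpow hq0.ne']
      have : (0:ℝ) < 1 + h s * s := by linarith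
      positivity
    · have key : |h s| ^ q = |h s| * |h s| ^ (1 / p) := by
        rw [hq, Real.rpow_add hz, Real.rpow_one]
      have h1p : |h s| ^ (1 / p) ≤ (2 * C₁) ^ (1 / p) * |s| := by
        have : |h s| ^ (1 / p) ≤ (2 * C₁ * |s| ^ p) ^ (1 / p) :=
          Real.rpow_le_rpow (abs_nonneg _) hb (by positivity)
        calc |h s| ^ (1 / p) ≤ (2 * C₁ * |s| ^ p) ^ (1 / p) := this
          _ = (2 * C₁) ^ (1 / p) * (|s| ^ p) ^ (1 / p) :=
              Real.mul_rpow h2C.le (by positivity)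
          _ = (2 * C₁) ^ (1 / p) * |s| := by
              rw [← Real.rpow_mul (abs_nonneg s), mul_one_div, div_self hp0.ne',
                Real.rpow_one]
      have : |h s| ^ q ≤ (2 * C₁) ^ (1 / p) * (h s * s) := by
        rw [key, ← habs]
        calc |h s| * |h s| ^ (1 / p) ≤ |h s| * ((2 * C₁) ^ (1 / p) * |s|) :=
              mul_le_mul_of_nonneg_left h1p (abs_nonneg _)
          _ = (2 * C₁) ^ (1 / p) * (|h s| * |s|) := by ring
      have hle : (2 * C₁) ^ (1 / p) ≤ C := by
        have h1 : (0:ℝ) < (2 * C₁) ^ q := Real.rpow_pos_of_pos h2C _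
        rw [hCdef]; linarith
      calc |h s| ^ q ≤ (2 * C₁) ^ (1 / p) * (h s * s) := this
        _ ≤ C * (h s * s) := mul_le_mul_of_nonneg_right hle hsign
        _ ≤ C * (1 + h s * s) := by nlinarith
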